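/- arXiv:2006.02061 — 3 statements merged into one kernel-verified Lean document; each statement's English description precedes it below -/
import Mathlib

section
/- For any elements u, v, w of a real inner product space, -⟪(3/2)•v - (1/2)•w, u - v⟫ ≥ -(1/2)‖u‖² + (1/2)‖v‖² + (1/4)‖u - v‖² - (1/4)‖v - w‖². -/
theorem extrapolation_inner_inequality {E : Type*} [NormedAddCommGroup E]
    [InnerProductSpace ℝ E] (u v w : E) :
    -(inner ℝ ((3 / 2 : ℝ) • v - (1 / 2 : ℝ) • w) (u - v) : ℝ) ≥
      -(1 / 2) * ‖u‖ ^ 2 + (1 / 2) * ‖v‖ ^ 2 + (1 / 4) * ‖u - v‖ ^ 2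
        - (1 / 4) * ‖v - w‖ ^ 2 := by
  have h1 : ‖u - v‖ ^ 2 = ‖u‖ ^ 2 - 2 * inner ℝ u v + ‖v‖ ^ 2 := by
    rw [@norm_sub_sq_real]
  have h2 : ‖v - w‖ ^ 2 = ‖v‖ ^ 2 - 2 * inner ℝ v w + ‖w‖ ^ 2 := by
    rw [@norm_sub_sq_real]
  have h3 : (0:ℝ) ≤ ‖(u - v) - (v - w)‖ ^ 2 := by positivity
  have h4 : ‖(u - v) - (v - w)‖ ^ 2 = ‖u - v‖ ^ 2 - 2 * inner ℝ (u - v) (v - w) + ‖v - w‖ ^ 2 := by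
    rw [@norm_sub_sq_real]
  have h5 : (inner ℝ (u - v) (v - w) : ℝ)
      = inner ℝ u v - inner ℝ u w - ‖v‖ ^ 2 + inner ℝ v w := by
    simp [inner_sub_left, inner_sub_right, real_inner_self_eq_norm_sq,
      real_inner_comm v u, real_inner_comm w v, real_inner_comm w u]
    ring
  have h6 : -(inner ℝ ((3 / 2 : ℝ) • v - (1 / 2 : ℝ) • w) (u - v) : ℝ)
      = -(3/2) * inner ℝ v u + (3/2) * ‖v‖ ^ 2 + (1/2) * inner ℝ w u - (1/2) * inner ℝ w v := by
    simp [inner_sub_left, inner_sub_right, inner_smul_left, real_inner_self_eq_norm_sq]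
    ring
  have h7 : (inner ℝ v u : ℝ) = inner ℝ u v := (real_inner_comm v u).symm
  have h8 : (inner ℝ w u : ℝ) = inner ℝ u w := (real_inner_comm w u).symm
  have h9 : (inner ℝ w v : ℝ) = inner ℝ v w := (real_inner_comm w v).symm
  nlinarith [h3, h4, h5, h6]
end

section
/- Let 0 < α < 1 and T > 0. The kernel ω_{1-α}(t) = t^{-α}/Γ(1-α) is positive semi-definite: for every continuous (or piecewise continuous) function w : [0,T] → ℝ, ∫₀ᵀ w(t) ∫₀ᵗ ω_{1-α}(t-s) w(s) ds dt ≥ 0. -/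
open intervalIntegral Real MeasureTheory Set

lemma psd_rep {α : ℝ} (hα : 0 < α) {x : ℝ} (hx : 0 < x) :
    ∫ lam in Ioi (0:ℝ), lam ^ (α - 1) * Real.exp (-(x * lam)) = Real.Gamma α * x ^ (-α) := by
  rw [Real.integral_rpow_mul_exp_neg_mul_Ioi hα hx, one_div, Real.inv_rpow hx.le,
    ← Real.rpow_neg hx.le, mul_comm]

lemma psd_lint {α : ℝ} (hα : 0 < α) {x : ℝ} (hx : 0 < x) :
    IntegrableOn (fun lam : ℝ => lam ^ (α - 1) * Real.exp (-(x * lam))) (Ioi 0) := by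
  have h := integrableOn_rpow_mul_exp_neg_mul_rpow (by linarith : (-1:ℝ) < α - 1) zero_lt_one hx
  simpa [Real.rpow_one, neg_mul] using h

lemma psd_D {α : ℝ} (hα : 0 < α) (hα1 : α < 1) {T : ℝ} (hT : 0 < T) :
    IntegrableOn (fun lam : ℝ => lam ^ (α - 1) * min T lam⁻¹) (Ioi 0) := by
  have hmeas : ∀ u : Set ℝ, u ⊆ Ioi 0 → MeasurableSet u →
      AEStronglyMeasurable (fun lam : ℝ => lam ^ (α - 1) * min T lam⁻¹) (volume.restrict u) := by
    intro u hu hum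
    apply ContinuousOn.aestronglyMeasurable ?_ hum
    intro x hx
    have hx0 : (0:ℝ) < x := hu hx
    exact (((Real.continuousAt_rpow_const x (α - 1) (Or.inl hx0.ne')).mul
      (continuousAt_const.min (continuousAt_inv₀ hx0.ne'))).continuousWithinAt).mono (fun y hy => trivial)
  rw [show Ioi (0:ℝ) = Ioc 0 1 ∪ Ioi 1 by rw [Set.Ioc_union_Ioi_eq_Ioi zero_le_one]]
  apply MeasureTheory.IntegrableOn.union
  · have hbase : IntegrableOn (fun lam : ℝ => lam ^ (α - 1)) (Ioc (0:ℝ) 1) := by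
      have h := intervalIntegral.intervalIntegrable_rpow' (a := 0) (b := 1)
        (by linarith : (-1:ℝ) < α - 1)
      rwa [intervalIntegrable_iff_integrableOn_Ioc_of_le zero_le_one] at h
    apply Integrable.mono' (hbase.const_mul T)
    · exact hmeas _ (fun x hx => hx.1) measurableSet_Ioc
    · filter_upwards [ae_restrict_mem measurableSet_Ioc] with lam hl
      have h0 : (0:ℝ) < lam := hl.1
      rw [Real.norm_eq_abs, abs_mul, abs_of_nonneg (Real.rpow_nonneg h0.le _),
        abs_of_pos (lt_min hT (inv_pos.2 h0))]
      calc lam ^ (α - 1) * min T lam⁻¹ ≤ lam ^ (α - 1) * T := by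
            gcongr
            exact min_le_left _ _
        _ = T * lam ^ (α - 1) := mul_comm _ _
  · have hbase : IntegrableOn (fun lam : ℝ => lam ^ (α - 2)) (Ioi (1:ℝ)) :=
      integrableOn_Ioi_rpow_of_lt (by linarith) one_pos
    apply Integrable.mono' hbase
    · exact hmeas _ (fun x hx => mem_Ioi.2 (lt_trans zero_lt_one (mem_Ioi.1 hx))) measurableSet_Ioi
    · filter_upwards [ae_restrict_mem measurableSet_Ioi] with lam hl
      have h0 : (0:ℝ) < lam := lt_trans zero_lt_one hl
      rw [Real.norm_eq_abs, abs_mul, abs_of_nonneg (Real.rpow_nonneg h0.le _),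
        abs_of_pos (lt_min hT (inv_pos.2 h0))]
      calc lam ^ (α - 1) * min T lam⁻¹ ≤ lam ^ (α - 1) * lam⁻¹ := by
            gcongr
            exact min_le_right _ _
        _ = lam ^ (α - 2) := by
            rw [← Real.rpow_neg_one lam, ← Real.rpow_add h0]
            norm_num [show α - 1 + -1 = α - 2 by ring]

set_option maxHeartbeats 1000000

theorem psd_key {α : ℝ} (hα : 0 < α) (hα1 : α < 1) {T : ℝ} (hT : 0 < T) (w : ℝ → ℝ)
    (hw : Continuous w) (M : ℝ) (hM : ∀ x, |w x| ≤ M) :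
    0 ≤ ∫ t in (0:ℝ)..T, w t * ∫ s in (0:ℝ)..t, (t - s) ^ (-α) * w s := by
  have hΓ : 0 < Real.Gamma α := Real.Gamma_pos_of_pos hα
  have hM0 : 0 ≤ M := (abs_nonneg _).trans (hM 0)
  set g : ℝ → ℝ → ℝ := fun lam t => ∫ s in (0:ℝ)..t, Real.exp (-((t - s) * lam)) * w s with hgdef
  -- continuity of g jointly
  have hgcont : Continuous (fun p : ℝ × ℝ => g p.1 p.2) := by
    have : Continuous fun p : ℝ × ℝ =>
        ∫ s in (0:ℝ)..p.2, Real.exp (-((p.2 - s) * p.1)) * w s := by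
      apply continuous_parametric_intervalIntegral_of_continuous
        (f := fun (p : ℝ × ℝ) s => Real.exp (-((p.2 - s) * p.1)) * w s) ?_ continuous_snd
      exact (Real.continuous_exp.comp
        (((continuous_fst.snd.sub continuous_snd).mul continuous_fst.fst).neg)).mul
        (hw.comp continuous_snd)
    exact this
  have hgcont2 : Continuous (fun p : ℝ × ℝ => g p.2 p.1) := by
    have : Continuous fun p : ℝ × ℝ =>
        ∫ s in (0:ℝ)..p.1, Real.exp (-((p.1 - s) * p.2)) * w s := by
      apply continuous_parametric_intervalIntegral_of_continuous
        (f := fun (p : ℝ × ℝ) s => Real.exp (-((p.1 - s) * p.2)) * w s) ?_ continuous_fst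
      exact (Real.continuous_exp.comp
        (((continuous_fst.fst.sub continuous_snd).mul continuous_fst.snd).neg)).mul
        (hw.comp continuous_snd)
    exact this
  have hgcont1 : ∀ t : ℝ, Continuous (fun lam : ℝ => g lam t) := by
    intro t
    have : Continuous fun lam : ℝ =>
        ∫ s in (0:ℝ)..t, Real.exp (-((t - s) * lam)) * w s := by
      apply continuous_parametric_intervalIntegral_of_continuous'
        (f := fun (lam : ℝ) s => Real.exp (-((t - s) * lam)) * w s)
      exact (Real.continuous_exp.comp
        (((continuous_const.sub continuous_snd).mul continuous_fst).neg)).mul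
        (hw.comp continuous_snd)
    exact this
  -- exact value of the exponential integral
  have expint : ∀ lam : ℝ, 0 < lam → ∀ t : ℝ,
      ∫ s in (0:ℝ)..t, Real.exp (-((t - s) * lam)) = (1 - Real.exp (-(t * lam))) / lam := by
    intro lam hlam t
    have hder : ∀ s : ℝ, HasDerivAt (fun u : ℝ => Real.exp (-((t - u) * lam)) / lam)
        (Real.exp (-((t - s) * lam))) s := by
      intro s
      have h1 : HasDerivAt (fun u : ℝ => -((t - u) * lam)) lam s := by
        have h0 : HasDerivAt (fun u : ℝ => t - u) (-1) s := (hasDerivAt_id s).const_sub t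
        have := (h0.mul_const lam).fun_neg
        simpa using this
      have h2 := (h1.exp).div_const lam
      rw [mul_div_cancel_right₀ _ hlam.ne'] at h2
      exact h2
    rw [intervalIntegral.integral_eq_sub_of_hasDerivAt (fun s _ => hder s)
      (Continuous.intervalIntegrable (by fun_prop) _ _)]
    simp only [sub_self, zero_mul, neg_zero, Real.exp_zero, sub_zero]
    ring
  -- bound on g
  have hgbound : ∀ lam : ℝ, 0 < lam → ∀ t : ℝ, 0 ≤ t → t ≤ T →
      |g lam t| ≤ M * min T lam⁻¹ := by
    intro lam hlam t ht htT
    have bound1 : |g lam t| ≤ M * T := by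
      have h := intervalIntegral.norm_integral_le_of_norm_le_const
        (C := M) (f := fun s => Real.exp (-((t - s) * lam)) * w s) (a := 0) (b := t) ?_
      · rw [Real.norm_eq_abs] at h
        calc |g lam t| ≤ M * |t - 0| := h
          _ = M * t := by rw [sub_zero, abs_of_nonneg ht]
          _ ≤ M * T := by gcongr
      · intro s hs
        rw [Set.uIoc_of_le ht] at hs
        rw [Real.norm_eq_abs, abs_mul, abs_of_pos (Real.exp_pos _)]
        calc Real.exp (-((t - s) * lam)) * |w s| ≤ 1 * M := by
              apply mul_le_mul _ (hM s) (abs_nonneg _) zero_le_one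
              rw [Real.exp_le_one_iff]
              have : 0 ≤ (t - s) * lam := mul_nonneg (by linarith [hs.2]) hlam.le
              linarith
          _ = M := one_mul M
    have bound2 : |g lam t| ≤ M * lam⁻¹ := by
      have habs : |g lam t| ≤ ∫ s in (0:ℝ)..t, M * Real.exp (-((t - s) * lam)) := by
        rw [← Real.norm_eq_abs]
        calc ‖g lam t‖ ≤ ∫ s in (0:ℝ)..t, ‖Real.exp (-((t - s) * lam)) * w s‖ :=
              intervalIntegral.norm_integral_le_integral_norm ht
          _ ≤ ∫ s in (0:ℝ)..t, M * Real.exp (-((t - s) * lam)) := by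
              apply intervalIntegral.integral_mono_on ht
              · exact Continuous.intervalIntegrable (by fun_prop) _ _
              · exact Continuous.intervalIntegrable (by fun_prop) _ _
              · intro s _
                rw [Real.norm_eq_abs, abs_mul, abs_of_pos (Real.exp_pos _)]
                calc Real.exp (-((t - s) * lam)) * |w s| ≤ Real.exp (-((t - s) * lam)) * M := by
                      gcongr
                      exact hM s
                  _ = M * Real.exp (-((t - s) * lam)) := mul_comm _ _
      rw [intervalIntegral.integral_const_mul, expint lam hlam t] at habs
      calc |g lam t| ≤ M * ((1 - Real.exp (-(t * lam))) / lam) := habs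
        _ ≤ M * lam⁻¹ := by
            gcongr
            rw [div_le_iff₀ hlam, inv_mul_cancel₀ hlam.ne']
            linarith [Real.exp_pos (-(t * lam))]
    rw [mul_min_of_nonneg _ _ hM0]
    exact le_min bound1 bound2

  -- Step A: representation of the singular inner integral
  have stepA : ∀ t : ℝ, 0 < t →
      Real.Gamma α * ∫ s in (0:ℝ)..t, (t - s) ^ (-α) * w s
        = ∫ lam in Ioi (0:ℝ), lam ^ (α - 1) * g lam t := by
    intro t ht
    have hFmeas : AEStronglyMeasurable
        (Function.uncurry fun (s lam : ℝ) => lam ^ (α - 1) * Real.exp (-((t - s) * lam)) * w s)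
        ((volume.restrict (Ioo 0 t)).prod (volume.restrict (Ioi 0))) := by
      rw [Measure.prod_restrict]
      apply ContinuousOn.aestronglyMeasurable ?_ (measurableSet_Ioo.prod measurableSet_Ioi)
      intro p hp
      apply ContinuousAt.continuousWithinAt
      have h1 : ContinuousAt (fun q : ℝ × ℝ => q.2 ^ (α - 1)) p :=
        (Real.continuousAt_rpow_const p.2 (α - 1) (Or.inl (ne_of_gt hp.2))).comp
          continuous_snd.continuousAt
      have h2 : Continuous (fun q : ℝ × ℝ => Real.exp (-((t - q.1) * q.2))) := by
        fun_prop
      exact (h1.mul h2.continuousAt).mul (hw.comp continuous_fst).continuousAt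
    have hInt : Integrable
        (Function.uncurry fun (s lam : ℝ) => lam ^ (α - 1) * Real.exp (-((t - s) * lam)) * w s)
        ((volume.restrict (Ioo 0 t)).prod (volume.restrict (Ioi 0))) := by
      rw [MeasureTheory.integrable_prod_iff hFmeas]
      constructor
      · filter_upwards [ae_restrict_mem measurableSet_Ioo] with s hs
        exact (psd_lint hα (sub_pos.2 hs.2)).mul_const (w s)
      · have heq : ∀ s ∈ Ioo (0:ℝ) t,
            (∫ lam in Ioi (0:ℝ), ‖lam ^ (α - 1) * Real.exp (-((t - s) * lam)) * w s‖)
              = Real.Gamma α * (t - s) ^ (-α) * |w s| := by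
          intro s hs
          have h1 : ∀ lam ∈ Ioi (0:ℝ),
              ‖lam ^ (α - 1) * Real.exp (-((t - s) * lam)) * w s‖
                = lam ^ (α - 1) * Real.exp (-((t - s) * lam)) * |w s| := by
            intro lam hl
            rw [Real.norm_eq_abs, abs_mul, abs_mul,
              abs_of_nonneg (Real.rpow_nonneg (le_of_lt hl) _), abs_of_pos (Real.exp_pos _)]
          rw [setIntegral_congr_fun measurableSet_Ioi h1, MeasureTheory.integral_mul_const,
            psd_rep hα (sub_pos.2 hs.2)]
        have hbase : IntegrableOn (fun s : ℝ => (t - s) ^ (-α)) (Ioo 0 t) := by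
          have h0 : IntervalIntegrable (fun x : ℝ => x ^ (-α)) volume 0 t :=
            intervalIntegral.intervalIntegrable_rpow' (by linarith)
          have h1 := (h0.comp_sub_left t).symm
          rw [sub_self, sub_zero] at h1
          rw [intervalIntegrable_iff_integrableOn_Ioc_of_le ht.le] at h1
          exact h1.mono_set Set.Ioo_subset_Ioc_self
        have hnice : Integrable (fun s => Real.Gamma α * (t - s) ^ (-α) * |w s|)
            (volume.restrict (Ioo 0 t)) := by
          apply Integrable.mono' (hbase.const_mul (Real.Gamma α * M))
          · apply ContinuousOn.aestronglyMeasurable ?_ measurableSet_Ioo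
            intro s hs
            apply ContinuousAt.continuousWithinAt
            have hrc : ContinuousAt (fun s : ℝ => (t - s) ^ (-α)) s :=
              (Real.continuousAt_rpow_const (t - s) (-α)
                (Or.inl (ne_of_gt (sub_pos.2 hs.2)))).comp
                ((continuous_const.sub continuous_id).continuousAt)
            exact (continuousAt_const.mul hrc).mul (hw.abs.continuousAt)
          · filter_upwards [ae_restrict_mem measurableSet_Ioo] with s hs
            rw [Real.norm_eq_abs, abs_mul, abs_mul, abs_of_pos hΓ,
              abs_of_nonneg (Real.rpow_nonneg (sub_pos.2 hs.2).le _), abs_abs]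
            calc Real.Gamma α * (t - s) ^ (-α) * |w s|
                ≤ Real.Gamma α * (t - s) ^ (-α) * M := by
                  gcongr
                  · exact mul_nonneg hΓ.le (Real.rpow_nonneg (sub_pos.2 hs.2).le _)
                  · exact hM s
              _ = Real.Gamma α * M * (t - s) ^ (-α) := by ring
        apply hnice.congr
        filter_upwards [ae_restrict_mem measurableSet_Ioo] with s hs
        exact (heq s hs).symm
    calc Real.Gamma α * ∫ s in (0:ℝ)..t, (t - s) ^ (-α) * w s
        = ∫ s in Ioo (0:ℝ) t, Real.Gamma α * ((t - s) ^ (-α) * w s) := by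
          rw [intervalIntegral.integral_of_le ht.le, MeasureTheory.integral_Ioc_eq_integral_Ioo,
            MeasureTheory.integral_const_mul]
      _ = ∫ s in Ioo (0:ℝ) t, ∫ lam in Ioi (0:ℝ),
            lam ^ (α - 1) * Real.exp (-((t - s) * lam)) * w s := by
          apply setIntegral_congr_fun measurableSet_Ioo
          intro s hs
          dsimp only
          rw [MeasureTheory.integral_mul_const, psd_rep hα (sub_pos.2 hs.2)]
          ring
      _ = ∫ lam in Ioi (0:ℝ), ∫ s in Ioo (0:ℝ) t,
            lam ^ (α - 1) * Real.exp (-((t - s) * lam)) * w s :=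
          MeasureTheory.integral_integral_swap hInt
      _ = ∫ lam in Ioi (0:ℝ), lam ^ (α - 1) * g lam t := by
          apply setIntegral_congr_fun measurableSet_Ioi
          intro lam hl
          dsimp only
          rw [hgdef]
          dsimp only
          rw [intervalIntegral.integral_of_le ht.le, MeasureTheory.integral_Ioc_eq_integral_Ioo,
            ← MeasureTheory.integral_const_mul]
          apply setIntegral_congr_fun measurableSet_Ioo
          intro s hs
          ring

  -- Step C: positivity for the exponential kernel
  have stepC : ∀ lam : ℝ, 0 < lam → 0 ≤ ∫ t in (0:ℝ)..T, w t * g lam t := by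
    intro lam hlam
    set F : ℝ → ℝ := fun t => ∫ s in (0:ℝ)..t, Real.exp (s * lam) * w s with hFdef
    have hFderiv : ∀ t : ℝ, HasDerivAt F (Real.exp (t * lam) * w t) t := by
      intro t
      have hc : Continuous fun s : ℝ => Real.exp (s * lam) * w s := by fun_prop
      exact intervalIntegral.integral_hasDerivAt_right (hc.intervalIntegrable _ _)
        (hc.stronglyMeasurableAtFilter _ _) hc.continuousAt
    have hFcont : Continuous F :=
      continuous_iff_continuousAt.mpr fun t => (hFderiv t).continuousAt
    have hgF : ∀ t : ℝ, g lam t = Real.exp (-(t * lam)) * F t := by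
      intro t
      rw [hgdef, hFdef]
      dsimp only
      rw [← intervalIntegral.integral_const_mul]
      apply intervalIntegral.integral_congr
      intro s _
      dsimp only
      rw [← mul_assoc, ← Real.exp_add]
      congr 2
      ring
    have parts := intervalIntegral.integral_mul_deriv_eq_deriv_mul
      (u := fun t => Real.exp (-(2 * lam * t)))
      (u' := fun t => -(2 * lam) * Real.exp (-(2 * lam * t)))
      (v := fun t => F t ^ 2)
      (v' := fun t => 2 * F t * (Real.exp (t * lam) * w t))
      (a := 0) (b := T)
      (fun x _ => by
        have h0 : HasDerivAt (fun t : ℝ => -(2 * lam * t)) (-(2 * lam)) x := by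
          simpa using ((hasDerivAt_id x).const_mul (2 * lam)).fun_neg
        simpa [mul_comm] using h0.exp)
      (fun x _ => by
        have := (hFderiv x).fun_pow 2
        simpa [mul_comm, mul_assoc, mul_left_comm] using this)
      (Continuous.intervalIntegrable (by fun_prop) _ _)
      (Continuous.intervalIntegrable (by continuity) _ _)
    have hwg : ∀ t : ℝ, w t * g lam t
        = (1/2) * (Real.exp (-(2 * lam * t)) * (2 * F t * (Real.exp (t * lam) * w t))) := by
      intro t
      rw [hgF t, show -(t * lam) = -(2 * lam * t) + t * lam by ring, Real.exp_add]
      ring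
    have : ∫ t in (0:ℝ)..T, w t * g lam t
        = (1/2) * ∫ t in (0:ℝ)..T,
            Real.exp (-(2 * lam * t)) * (2 * F t * (Real.exp (t * lam) * w t)) := by
      rw [← intervalIntegral.integral_const_mul]
      apply intervalIntegral.integral_congr
      intro t _
      exact hwg t
    rw [this, parts]
    have hF0 : F 0 = 0 := intervalIntegral.integral_same
    have hterm1 : 0 ≤ Real.exp (-(2 * lam * T)) * F T ^ 2 :=
      mul_nonneg (Real.exp_pos _).le (sq_nonneg _)
    have hterm2 : 0 ≤ - ∫ t in (0:ℝ)..T, -(2 * lam) * Real.exp (-(2 * lam * t)) * F t ^ 2 := by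
      rw [← intervalIntegral.integral_neg]
      apply intervalIntegral.integral_nonneg hT.le
      intro u _
      have : -(-(2 * lam) * Real.exp (-(2 * lam * u)) * F u ^ 2)
          = 2 * lam * Real.exp (-(2 * lam * u)) * F u ^ 2 := by ring
      rw [this]
      positivity
    rw [hF0]
    nlinarith [hterm1, hterm2]
  -- Fubini for the outer double integral
  have hHmeas : AEStronglyMeasurable
      (Function.uncurry fun (t lam : ℝ) => lam ^ (α - 1) * (w t * g lam t))
      ((volume.restrict (Ioo 0 T)).prod (volume.restrict (Ioi 0))) := by
    rw [Measure.prod_restrict]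
    apply ContinuousOn.aestronglyMeasurable ?_ (measurableSet_Ioo.prod measurableSet_Ioi)
    intro p hp
    apply ContinuousAt.continuousWithinAt
    have h1 : ContinuousAt (fun q : ℝ × ℝ => q.2 ^ (α - 1)) p :=
      (Real.continuousAt_rpow_const p.2 (α - 1) (Or.inl (ne_of_gt hp.2))).comp
        continuous_snd.continuousAt
    have h2 : Continuous (fun q : ℝ × ℝ => w q.1 * g q.2 q.1) :=
      (hw.comp continuous_fst).mul hgcont2
    exact h1.mul h2.continuousAt
  have hsliceInt : ∀ t ∈ Ioo (0:ℝ) T,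
      Integrable (fun lam : ℝ => lam ^ (α - 1) * (w t * g lam t)) (volume.restrict (Ioi 0)) := by
    intro t htm
    apply Integrable.mono' ((psd_D hα hα1 hT).const_mul (M * M))
    · apply ContinuousOn.aestronglyMeasurable ?_ measurableSet_Ioi
      intro lam hl
      apply ContinuousAt.continuousWithinAt
      have h1 : ContinuousAt (fun lam : ℝ => lam ^ (α - 1)) lam :=
        Real.continuousAt_rpow_const lam (α - 1) (Or.inl (ne_of_gt hl))
      have h2 : Continuous (fun lam : ℝ => w t * g lam t) :=
        continuous_const.mul (hgcont1 t)
      exact h1.mul h2.continuousAt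
    · filter_upwards [ae_restrict_mem measurableSet_Ioi] with lam hl
      have hb := hgbound lam hl t htm.1.le htm.2.le
      rw [Real.norm_eq_abs, abs_mul, abs_of_nonneg (Real.rpow_nonneg (le_of_lt hl) _), abs_mul]
      calc lam ^ (α - 1) * (|w t| * |g lam t|)
          ≤ lam ^ (α - 1) * (M * (M * min T lam⁻¹)) := by
            exact mul_le_mul_of_nonneg_left
              (mul_le_mul (hM t) hb (abs_nonneg _) hM0)
              (Real.rpow_nonneg (le_of_lt hl) _)
        _ = M * M * (lam ^ (α - 1) * min T lam⁻¹) := by ring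
  have hHint : Integrable
      (Function.uncurry fun (t lam : ℝ) => lam ^ (α - 1) * (w t * g lam t))
      ((volume.restrict (Ioo 0 T)).prod (volume.restrict (Ioi 0))) := by
    rw [MeasureTheory.integrable_prod_iff hHmeas]
    constructor
    · filter_upwards [ae_restrict_mem measurableSet_Ioo] with t htm
      exact hsliceInt t htm
    · apply Integrable.mono'
        (integrable_const (M * M * ∫ lam in Ioi (0:ℝ), lam ^ (α - 1) * min T lam⁻¹))
      · exact hHmeas.norm.integral_prod_right'
      · filter_upwards [ae_restrict_mem measurableSet_Ioo] with t htm
        rw [Real.norm_eq_abs, abs_of_nonneg (integral_nonneg (fun lam => norm_nonneg _))]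
        have hmono : (∫ lam in Ioi (0:ℝ), ‖lam ^ (α - 1) * (w t * g lam t)‖)
            ≤ ∫ lam in Ioi (0:ℝ), M * M * (lam ^ (α - 1) * min T lam⁻¹) := by
          apply MeasureTheory.integral_mono_ae (hsliceInt t htm).norm
            ((psd_D hα hα1 hT).const_mul (M * M))
          filter_upwards [ae_restrict_mem measurableSet_Ioi] with lam hl
          have hb := hgbound lam hl t htm.1.le htm.2.le
          rw [Real.norm_eq_abs, abs_mul, abs_of_nonneg (Real.rpow_nonneg (le_of_lt hl) _),
            abs_mul]
          calc lam ^ (α - 1) * (|w t| * |g lam t|)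
              ≤ lam ^ (α - 1) * (M * (M * min T lam⁻¹)) := by
                exact mul_le_mul_of_nonneg_left
                  (mul_le_mul (hM t) hb (abs_nonneg _) hM0)
                  (Real.rpow_nonneg (le_of_lt hl) _)
            _ = M * M * (lam ^ (α - 1) * min T lam⁻¹) := by ring
        calc (∫ lam in Ioi (0:ℝ), ‖lam ^ (α - 1) * (w t * g lam t)‖) ≤ _ := hmono
          _ = M * M * ∫ lam in Ioi (0:ℝ), lam ^ (α - 1) * min T lam⁻¹ :=
            MeasureTheory.integral_const_mul _ _
  -- Put everything together
  have key : (∫ t in (0:ℝ)..T, w t * ∫ s in (0:ℝ)..t, (t - s) ^ (-α) * w s)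
      = (Real.Gamma α)⁻¹ * ∫ lam in Ioi (0:ℝ), ∫ t in Ioo (0:ℝ) T,
          lam ^ (α - 1) * (w t * g lam t) := by
    rw [intervalIntegral.integral_of_le hT.le, MeasureTheory.integral_Ioc_eq_integral_Ioo,
      ← MeasureTheory.integral_integral_swap hHint]
    rw [← MeasureTheory.integral_const_mul]
    apply setIntegral_congr_fun measurableSet_Ioo
    intro t htm
    dsimp only
    have h2 : ∫ s in (0:ℝ)..t, (t - s) ^ (-α) * w s
        = (Real.Gamma α)⁻¹ * ∫ lam in Ioi (0:ℝ), lam ^ (α - 1) * g lam t := by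
      rw [← stepA t htm.1, inv_mul_cancel_left₀ hΓ.ne']
    rw [h2, show (fun lam : ℝ => lam ^ (α - 1) * (w t * g lam t))
        = fun lam : ℝ => w t * (lam ^ (α - 1) * g lam t) from funext fun lam => by ring,
      MeasureTheory.integral_const_mul]
    ring
  rw [key]
  apply mul_nonneg (inv_nonneg.2 hΓ.le)
  apply setIntegral_nonneg measurableSet_Ioi
  intro lam hl
  rw [MeasureTheory.integral_const_mul]
  apply mul_nonneg (Real.rpow_nonneg (le_of_lt hl) _)
  rw [← MeasureTheory.integral_Ioc_eq_integral_Ioo, ← intervalIntegral.integral_of_le hT.le]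
  exact stepC lam hl

theorem kernel_positive_semidefinite (α : ℝ) (hα : 0 < α) (hα1 : α < 1)
    (T : ℝ) (hT : 0 < T) (w : ℝ → ℝ) (hw : ContinuousOn w (Set.Icc 0 T)) :
    0 ≤ ∫ t in (0:ℝ)..T,
        w t * ∫ s in (0:ℝ)..t, (t - s) ^ (-α) / Real.Gamma (1 - α) * w s := by
  have hΓ1 : 0 < Real.Gamma (1 - α) := Real.Gamma_pos_of_pos (by linarith)
  set v : ℝ → ℝ := fun t => w (max 0 (min t T)) with hvdef
  have hv : Continuous v := by
    apply hw.comp_continuous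
    · exact continuous_const.max (continuous_id.min continuous_const)
    · intro x
      exact ⟨le_max_left _ _, max_le hT.le (min_le_right _ _)⟩
  obtain ⟨M, hM⟩ := (isCompact_Icc (a := (0:ℝ)) (b := T)).exists_bound_of_continuousOn hw
  have hvM : ∀ x, |v x| ≤ M := by
    intro x
    have hmem : max 0 (min x T) ∈ Set.Icc (0:ℝ) T :=
      ⟨le_max_left _ _, max_le hT.le (min_le_right _ _)⟩
    simpa [hvdef, Real.norm_eq_abs] using hM _ hmem
  have hvw : ∀ x ∈ Set.Icc (0:ℝ) T, v x = w x := by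
    intro x hx
    rw [hvdef]
    dsimp only
    rw [min_eq_left hx.2, max_eq_right hx.1]
  have hEq : (∫ t in (0:ℝ)..T,
        w t * ∫ s in (0:ℝ)..t, (t - s) ^ (-α) / Real.Gamma (1 - α) * w s)
      = ∫ t in (0:ℝ)..T,
          v t * ∫ s in (0:ℝ)..t, (t - s) ^ (-α) / Real.Gamma (1 - α) * v s := by
    apply intervalIntegral.integral_congr
    intro t ht
    rw [Set.uIcc_of_le hT.le] at ht
    dsimp only
    rw [hvw t ht]
    congr 1
    apply intervalIntegral.integral_congr
    intro s hs
    rw [Set.uIcc_of_le ht.1] at hs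
    dsimp only
    rw [hvw s ⟨hs.1, hs.2.trans ht.2⟩]
  rw [hEq]
  have h2 : (∫ t in (0:ℝ)..T,
        v t * ∫ s in (0:ℝ)..t, (t - s) ^ (-α) / Real.Gamma (1 - α) * v s)
      = (Real.Gamma (1 - α))⁻¹ *
          ∫ t in (0:ℝ)..T, v t * ∫ s in (0:ℝ)..t, (t - s) ^ (-α) * v s := by
    rw [← intervalIntegral.integral_const_mul]
    apply intervalIntegral.integral_congr
    intro t _
    dsimp only
    have hinner : ∫ s in (0:ℝ)..t, (t - s) ^ (-α) / Real.Gamma (1 - α) * v s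
        = (Real.Gamma (1 - α))⁻¹ * ∫ s in (0:ℝ)..t, (t - s) ^ (-α) * v s := by
      rw [← intervalIntegral.integral_const_mul]
      apply intervalIntegral.integral_congr
      intro s _
      dsimp only
      ring
    rw [hinner]
    ring
  rw [h2]
  exact mul_nonneg (inv_nonneg.2 hΓ1.le) (psd_key hα hα1 hT v hv M hvM)
end

section
/- The time-discrete convex splitting scheme conserves mass: if for each n ≥ 1 the update satisfies Σ_{k=1}^n ā_{n-k}ⁿ (φᵏ - φᵏ⁻¹) = M Δμ^{n-1/2} with periodic boundary conditions and ā₀ⁿ > 0, then ∫_Ω φⁿ dx = ∫_Ω φ⁰ dx for all n, since ∫_Ω Δμ dx = 0. -/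
open MeasureTheory

theorem discrete_scheme_mass_conservation
    {Ω : Type*} [MeasurableSpace Ω] (ν : Measure Ω)
    (M : ℝ) (φ : ℕ → Ω → ℝ) (Δμ : ℕ → Ω → ℝ) (abar : ℕ → ℕ → ℝ)
    (hφint : ∀ n, Integrable (φ n) ν)
    (hΔμint : ∀ n, Integrable (Δμ n) ν)
    (habar0 : ∀ n ≥ 1, 0 < abar n 0)
    (hΔμ : ∀ n ≥ 1, ∫ x, Δμ n x ∂ν = 0)
    (hscheme : ∀ n ≥ 1, ∀ x,
        ∑ k ∈ Finset.Icc 1 n, abar n (n - k) * (φ k x - φ (k - 1) x) = M * Δμ n x) :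
    ∀ n, ∫ x, φ n x ∂ν = ∫ x, φ 0 x ∂ν := by
  intro n
  induction n using Nat.strong_induction_on with
  | _ n ih =>
    match n with
    | 0 => rfl
    | Nat.succ m =>
      have hn1 : m + 1 ≥ 1 := Nat.le_add_left 1 m
      have hint : ∀ k : ℕ,
          Integrable (fun x => abar (m+1) (m+1-k) * (φ k x - φ (k-1) x)) ν :=
        fun k => ((hφint k).sub (hφint (k-1))).const_mul _
      have key : ∑ k ∈ Finset.Icc 1 (m+1),
          abar (m+1) (m+1-k) * ((∫ x, φ k x ∂ν) - ∫ x, φ (k-1) x ∂ν) = 0 := by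
        have h1 : ∫ x, (∑ k ∈ Finset.Icc 1 (m+1),
            abar (m+1) (m+1-k) * (φ k x - φ (k-1) x)) ∂ν
            = ∫ x, M * Δμ (m+1) x ∂ν := by
          refine integral_congr_ae (Filter.Eventually.of_forall ?_)
          intro x; exact hscheme (m+1) hn1 x
        rw [integral_finset_sum _ (fun k _ => hint k)] at h1
        simp only [MeasureTheory.integral_const_mul, integral_sub (hφint _) (hφint _)] at h1
        rw [hΔμ (m+1) hn1, mul_zero] at h1
        exact h1
      rw [Finset.sum_Icc_succ_top hn1] at key
      have hzero : ∑ k ∈ Finset.Icc 1 m,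
          abar (m+1) (m+1-k) * ((∫ x, φ k x ∂ν) - ∫ x, φ (k-1) x ∂ν) = 0 := by
        apply Finset.sum_eq_zero
        intro k hk
        obtain ⟨hk1, hk2⟩ := Finset.mem_Icc.mp hk
        rw [ih k (Nat.lt_succ_of_le hk2),
          ih (k-1) (lt_of_le_of_lt (Nat.sub_le k 1) (Nat.lt_succ_of_le hk2)),
          sub_self, mul_zero]
      rw [hzero, zero_add, Nat.sub_self] at key
      have hpos := habar0 (m+1) hn1
      have hdiff : (∫ x, φ (m+1) x ∂ν) - ∫ x, φ (m+1-1) x ∂ν = 0 := by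
        rcases mul_eq_zero.mp key with h | h
        · exact absurd h (ne_of_gt hpos)
        · exact h
      have hm := ih m (Nat.lt_succ_self m)
      simp only [Nat.add_sub_cancel] at hdiff
      linarith
end
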